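/- For every rational function R ∈ RatFunc ℂ there exists a unique rational function S ∈ RatFunc ℂ such that a_n(S) = a_{2n+1}(R) for all n ∈ ℤ. (This shows that the operation of extracting the odd-indexed Laurent coefficients maps rational functions to rational functions, so the map 𝔉 is well defined.) -/

import Mathlib

open Polynomial HahnSeries

lemma coeff_comp_neg_X (p : ℂ[X]) (n : ℕ) :
    (p.comp (-X)).coeff n = (-1)^n * p.coeff n := by
  induction p using Polynomial.induction_on' with
  | add p q hp hq => simp [add_comp, hp, hq, mul_add]
  | monomial m a =>
    simp only [monomial_comp]
    rw [show (C a * (-X) ^ m : ℂ[X]) = C ((-1)^m * a) * X ^ m by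
      rw [neg_pow]; push_cast [map_mul, map_pow, map_neg, map_one]; ring,
      coeff_C_mul, coeff_X_pow, coeff_monomial]
    by_cases h : n = m
    · simp [h]
    · rw [if_neg h, if_neg (fun hmn => h hmn.symm)]; simp

lemma expand_contract_even {p : ℂ[X]} (h : ∀ k : ℕ, ¬ (2 ∣ k) → p.coeff k = 0) :
    Polynomial.expand ℂ 2 (contract 2 p) = p := by
  ext n
  rw [Polynomial.coeff_expand (by norm_num : 0 < 2), coeff_contract (two_ne_zero)]
  split_ifs with hd
  · rw [Nat.div_mul_cancel hd]
  · exact (h n hd).symm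

noncomputable def negS (f : LaurentSeries ℂ) : LaurentSeries ℂ where
  coeff n := (-1 : ℂ)^n * f.coeff n
  isPWO_support' := f.isPWO_support'.mono (fun n hn => by
    simp only [Function.mem_support, ne_eq] at hn ⊢
    intro h; exact hn (by rw [h, mul_zero]))

@[simp] lemma negS_coeff (f : LaurentSeries ℂ) (n : ℤ) :
    (negS f).coeff n = (-1 : ℂ)^n * f.coeff n := rfl

lemma negS_support (f : LaurentSeries ℂ) : (negS f).support = f.support := by
  ext n
  simp only [HahnSeries.mem_support, negS_coeff, ne_eq, mul_eq_zero, not_or]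
  constructor
  · exact fun h => h.2
  · exact fun h => ⟨fun h1 => (zpow_ne_zero n (by norm_num : (-1:ℂ) ≠ 0)) h1, h⟩

lemma mul_negS (Q f : LaurentSeries ℂ) (hQ : ∀ m : ℤ, ¬ (2 ∣ m) → Q.coeff m = 0) :
    Q * negS f = negS (Q * f) := by
  ext m
  rw [negS_coeff,
    HahnSeries.coeff_mul_right' f.isPWO_support (le_of_eq (negS_support f)),
    HahnSeries.coeff_mul, Finset.mul_sum]
  apply Finset.sum_congr rfl
  rintro ⟨i, j⟩ hij
  rw [Finset.mem_addAntidiagonal] at hij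
  obtain ⟨hi, hj, hsum⟩ := hij
  have h2 : (2 : ℤ) ∣ i := by
    by_contra hc
    exact hi (hQ i hc)
  obtain ⟨k, rfl⟩ := h2
  rw [negS_coeff, ← hsum]
  rw [show ((-1:ℂ)^(2*k+j)) = (-1)^j by
    rw [zpow_add₀ (by norm_num : (-1:ℂ) ≠ 0), zpow_mul]; norm_num]
  ring

noncomputable def Dbl : LaurentSeries ℂ →+* LaurentSeries ℂ :=
  HahnSeries.embDomainRingHom (AddMonoidHom.mulLeft (2:ℤ))
    (fun a b => by simp only [AddMonoidHom.coe_mulLeft] at *; omega)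
    (fun a b => by simp only [AddMonoidHom.coe_mulLeft]; omega)

lemma Dbl_coeff_even (f : LaurentSeries ℂ) (n : ℤ) : (Dbl f).coeff (2*n) = f.coeff n :=
  HahnSeries.embDomain_coeff

lemma Dbl_coeff_odd (f : LaurentSeries ℂ) (m : ℤ) (hm : ¬ (2 ∣ m)) : (Dbl f).coeff m = 0 :=
  HahnSeries.embDomain_notin_range (by rintro ⟨k, rfl⟩; exact hm ⟨k, rfl⟩)

noncomputable def polyL (r : ℂ[X]) : LaurentSeries ℂ := ((r : PowerSeries ℂ) : LaurentSeries ℂ)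

lemma polyL_coeff (r : ℂ[X]) (m : ℤ) :
    (polyL r).coeff m = if m < 0 then 0 else r.coeff m.natAbs := by
  rw [polyL, PowerSeries.coeff_coe]
  simp [Polynomial.coeff_coe]

lemma Dbl_polyL (r : ℂ[X]) : Dbl (polyL r) = polyL (Polynomial.expand ℂ 2 r) := by
  ext m
  by_cases hd : (2:ℤ) ∣ m
  · obtain ⟨k, rfl⟩ := hd
    rw [Dbl_coeff_even, polyL_coeff, polyL_coeff]
    by_cases hk : k < 0
    · rw [if_pos hk, if_pos (by omega)]
    · rw [if_neg hk, if_neg (by omega), Polynomial.coeff_expand (by norm_num : 0<2)]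
      rw [if_pos (by omega : 2 ∣ (2*k).natAbs), show (2*k).natAbs / 2 = k.natAbs by omega]
  · rw [Dbl_coeff_odd _ _ hd, polyL_coeff]
    split_ifs with h
    · rfl
    · rw [Polynomial.coeff_expand (by norm_num : 0<2), if_neg (by omega : ¬ 2 ∣ m.natAbs)]

lemma polyL_mul (a b : ℂ[X]) : polyL (a * b) = polyL a * polyL b := by
  simp [polyL, Polynomial.coe_mul, PowerSeries.coe_mul]

lemma polyL_sub (a b : ℂ[X]) : polyL (a - b) = polyL a - polyL b := by
  simp [polyL, Polynomial.coe_sub, PowerSeries.coe_sub]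

lemma polyL_add (a b : ℂ[X]) : polyL (a + b) = polyL a + polyL b := by
  simp [polyL, Polynomial.coe_add, PowerSeries.coe_add]

lemma polyL_one : polyL (1 : ℂ[X]) = 1 := by
  simp [polyL, Polynomial.coe_one, PowerSeries.coe_one]

lemma polyL_two : polyL (2 : ℂ[X]) = 2 := by
  rw [show (2:ℂ[X]) = 1 + 1 by norm_num, polyL_add, polyL_one]; norm_num

lemma polyL_X : polyL (X : ℂ[X]) = HahnSeries.single 1 1 := by
  rw [polyL, Polynomial.coe_X, HahnSeries.ofPowerSeries_X]

lemma polyL_comp_neg (r : ℂ[X]) : polyL (r.comp (-X)) = negS (polyL r) := by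
  ext m
  rw [negS_coeff, polyL_coeff, polyL_coeff]
  split_ifs with h
  · rw [mul_zero]
  · rw [coeff_comp_neg_X]
    congr 1
    obtain ⟨k, rfl⟩ := Int.eq_ofNat_of_zero_le (le_of_not_gt h)
    simp [zpow_natCast]

lemma polyL_ne_zero {r : ℂ[X]} (hr : r ≠ 0) : polyL r ≠ 0 := fun h =>
  (by simpa using hr : (r : PowerSeries ℂ) ≠ 0) (HahnSeries.ofPowerSeries_injective (h.trans (map_zero _).symm))

lemma coe_algebraMap_poly (P : ℂ[X]) :
    ((algebraMap ℂ[X] (RatFunc ℂ) P : RatFunc ℂ) : LaurentSeries ℂ) = polyL P :=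
  (RatFunc.coe_coe P).symm

/-- The `n`-th coefficient of the Laurent expansion at `0` of a rational function. -/
noncomputable def coeffL (R : RatFunc ℂ) (n : ℤ) : ℂ :=
  ((R : LaurentSeries ℂ)).coeff n

/-- For every rational function `R` there is a unique rational function `S` whose Laurent
coefficients satisfy `a_n(S) = a_{2n+1}(R)` for all `n : ℤ`. -/
theorem stmt_0 (R : RatFunc ℂ) :
    ∃! S : RatFunc ℂ, ∀ n : ℤ, coeffL S n = coeffL R (2 * n + 1) := by
  classical
  set p : ℂ[X] := R.num with hp
  set q : ℂ[X] := R.denom with hqdef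
  set c : ℂ[X] := q.comp (-X) with hc
  set p' : ℂ[X] := p * c with hp'
  set q' : ℂ[X] := q * c with hq'
  set u : ℂ[X] := p' - p'.comp (-X) with hu
  set w : ℂ[X] := u.divX with hw
  have hcompcomp : ∀ r : ℂ[X], (r.comp (-X)).comp (-X) = r := fun r => by
    rw [comp_assoc, neg_comp, X_comp, neg_neg, comp_X]
  have hcne : c ≠ 0 := by
    intro h
    apply R.denom_ne_zero
    have := congrArg (fun r : ℂ[X] => r.comp (-X)) h
    simpa [hc, hcompcomp q] using this
  have hq'ne : q' ≠ 0 := mul_ne_zero R.denom_ne_zero hcne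
  have hq'even : ∀ k : ℕ, ¬ (2 ∣ k) → q'.coeff k = 0 := by
    intro k hk
    have hsym : q'.comp (-X) = q' := by
      rw [hq', mul_comp, hc, hcompcomp q, mul_comm]
    have := coeff_comp_neg_X q' k
    rw [hsym] at this
    have hodd : ((-1:ℂ))^k = -1 := by
      obtain ⟨j, rfl⟩ : ∃ j, k = 2*j+1 := ⟨k/2, by omega⟩
      rw [pow_succ, pow_mul]; norm_num
    rw [hodd] at this
    linear_combination (this) / 2
  have hu0 : u.coeff 0 = 0 := by
    rw [hu, Polynomial.coeff_sub, coeff_comp_neg_X]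
    norm_num
  have hXw : X * w = u := by
    have := X_mul_divX_add u
    rw [hu0] at this
    simpa using this
  have hweven : ∀ k : ℕ, ¬ (2 ∣ k) → w.coeff k = 0 := by
    intro k hk
    rw [hw, coeff_divX, hu, Polynomial.coeff_sub, coeff_comp_neg_X]
    have : ((-1:ℂ))^(k+1) = 1 := by
      obtain ⟨j, rfl⟩ : ∃ j, k = 2*j+1 := ⟨k/2, by omega⟩
      rw [show 2*j+1+1 = 2*(j+1) by ring, pow_mul]; norm_num
    rw [this]; ring
  have hwc : Polynomial.expand ℂ 2 (contract 2 w) = w := expand_contract_even hweven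
  have hqc : Polynomial.expand ℂ 2 (contract 2 q') = q' := expand_contract_even hq'even
  have hcq'ne : (2 : ℂ[X]) * contract 2 q' ≠ 0 := by
    apply mul_ne_zero (by norm_num)
    intro h
    apply hq'ne
    rw [← hqc, h, map_zero]
  set S : RatFunc ℂ :=
    algebraMap ℂ[X] (RatFunc ℂ) (contract 2 w) /
      algebraMap ℂ[X] (RatFunc ℂ) ((2 : ℂ[X]) * contract 2 q') with hSdef
  -- RatFunc-level identities
  have hS : algebraMap ℂ[X] (RatFunc ℂ) ((2:ℂ[X]) * contract 2 q') * S
      = algebraMap ℂ[X] (RatFunc ℂ) (contract 2 w) := by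
    rw [hSdef, mul_div_cancel₀ _ (RatFunc.algebraMap_ne_zero hcq'ne)]
  have hR : R * algebraMap ℂ[X] (RatFunc ℂ) q' = algebraMap ℂ[X] (RatFunc ℂ) p' := by
    rw [hq', hp', map_mul, map_mul, ← mul_assoc]
    congr 1
    rw [← R.num_div_denom, div_mul_cancel₀ _ (RatFunc.algebraMap_ne_zero R.denom_ne_zero)]
  -- move to Laurent series
  set f : LaurentSeries ℂ := (R : LaurentSeries ℂ) with hf
  set g : LaurentSeries ℂ := (S : LaurentSeries ℂ) with hg
  have L1 : polyL ((2:ℂ[X]) * contract 2 q') * g = polyL (contract 2 w) := by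
    have := congrArg (fun T : RatFunc ℂ => (T : LaurentSeries ℂ)) hS
    open RatFunc in simpa only [map_mul (algebraMap (RatFunc ℂ) (LaurentSeries ℂ)), coe_algebraMap_poly] using this
  have he : Polynomial.expand ℂ 2 ((2:ℂ[X]) * contract 2 q') = 2 * q' := by
    rw [map_mul, hqc, map_ofNat]
  have L2 : polyL ((2:ℂ[X]) * q') * Dbl g = polyL w := by
    have := congrArg Dbl L1
    rwa [map_mul, Dbl_polyL, Dbl_polyL, hwc, he] at this
  have L3 : polyL ((2:ℂ[X]) * q') * (HahnSeries.single 1 1 * Dbl g) = polyL u := by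
    rw [show polyL ((2:ℂ[X]) * q') * (HahnSeries.single 1 1 * Dbl g)
        = HahnSeries.single 1 1 * (polyL ((2:ℂ[X]) * q') * Dbl g) by ring, L2,
      ← polyL_X, ← polyL_mul, hXw]
  have hfq : f * polyL q' = polyL p' := by
    have := congrArg (fun T : RatFunc ℂ => (T : LaurentSeries ℂ)) hR
    open RatFunc in simpa only [map_mul (algebraMap (RatFunc ℂ) (LaurentSeries ℂ)), coe_algebraMap_poly] using this
  have hq'evenL : ∀ m : ℤ, ¬ (2 ∣ m) → (polyL q').coeff m = 0 := by
    intro m hm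
    rw [polyL_coeff]
    split_ifs with h
    · rfl
    · exact hq'even m.natAbs (by omega)
  have hkey : polyL u = polyL q' * (f - negS f) := by
    rw [hu, polyL_sub, polyL_comp_neg, ← hfq, mul_comm f, ← mul_negS _ _ hq'evenL,
      mul_sub]
  have main : (2 : LaurentSeries ℂ) * (HahnSeries.single 1 1 * Dbl g) = f - negS f := by
    have h2q : polyL ((2:ℂ[X]) * q') = 2 * polyL q' := by rw [polyL_mul, polyL_two]
    rw [h2q] at L3
    rw [hkey] at L3
    apply mul_left_cancel₀ (polyL_ne_zero hq'ne)
    rw [← L3]; ring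
  have hcoeffs : ∀ n : ℤ, coeffL S n = coeffL R (2 * n + 1) := by
    intro n
    have hthis := congrArg (fun h : LaurentSeries ℂ => h.coeff (2*n+1)) main
    rw [two_mul, HahnSeries.coeff_add, HahnSeries.coeff_single_mul_add,
      one_mul, Dbl_coeff_even, HahnSeries.coeff_sub, negS_coeff,
      show ((-1:ℂ))^(2*n+1) = -1 by
        rw [zpow_add₀ (by norm_num : (-1:ℂ) ≠ 0), zpow_mul]; norm_num] at hthis
    show g.coeff n = f.coeff (2*n+1)
    linear_combination hthis / 2
  refine ⟨S, hcoeffs, ?_⟩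
  intro T hT
  open RatFunc in apply (algebraMap (RatFunc ℂ) (LaurentSeries ℂ)).injective
  ext m
  exact (hT m).trans (hcoeffs m).symm
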